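/- If an n-Brinkhuis k-triple exists and s = lim_{m→∞} (s_m)^{1/m} denotes the growth rate of ternary squarefree words, then s ≥ k^{1/(n-1)}. -/

import Mathlib

/-- A word is squarefree if it contains no factor `x ++ x` with `x` nonempty. -/
def IsSquarefreeWord {α : Type*} (w : List α) : Prop :=
  ∀ x : List α, x ≠ [] → ¬ ∃ a b : List α, w = a ++ x ++ x ++ b

/-- The number of ternary squarefree words of length `n`. -/
noncomputable def sCount (n : ℕ) : ℕ :=
  {w : List (Fin 3) | w.length = n ∧ IsSquarefreeWord w}.ncard

/-- An `n`-Brinkhuis `k`-triple: three families of `k` distinct squarefree ternary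
words of length `n` such that substituting the three families for the three letters
of any squarefree word of length 3 always yields a squarefree word. -/
def IsBrinkhuisTriple (n k : ℕ) (B : Fin 3 → Fin k → List (Fin 3)) : Prop :=
  (∀ (i : Fin 3) (j : Fin k), (B i j).length = n ∧ IsSquarefreeWord (B i j)) ∧
  (∀ i : Fin 3, Function.Injective (B i)) ∧
  (∀ i₁ i₂ i₃ : Fin 3, IsSquarefreeWord [i₁, i₂, i₃] →
    ∀ j₁ j₂ j₃ : Fin k, IsSquarefreeWord (B i₁ j₁ ++ B i₂ j₂ ++ B i₃ j₃))

namespace BrinkhuisAux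

variable {α : Type*}

/-- segment of a list: positions [a, b) -/
def seg (y : List α) (a b : ℕ) : List α := (y.drop a).take (b - a)

lemma sf_iff (w : List α) : IsSquarefreeWord w ↔ ∀ x : List α, x ≠ [] → ¬ (x ++ x) <:+: w := by
  unfold IsSquarefreeWord
  refine forall_congr' fun x => imp_congr Iff.rfl (not_congr ?_)
  constructor
  · rintro ⟨a, b, rfl⟩; exact ⟨a, b, by simp [List.append_assoc]⟩
  · rintro ⟨a, b, h⟩; exact ⟨a, b, by rw [← h]; simp [List.append_assoc]⟩

lemma sf_of_infix {v w : List α} (h : v <:+: w) (hw : IsSquarefreeWord w) :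
    IsSquarefreeWord v := by
  rw [sf_iff] at *
  exact fun x hx hi => hw x hx (hi.trans h)

lemma seg_infix (y : List α) (a b : ℕ) : seg y a b <:+: y :=
  ((y.drop a).take_prefix _).isInfix.trans (y.drop_suffix a).isInfix

lemma seg_subseg (y : List α) {a b c d : ℕ} (hca : c ≤ a) (hbd : b ≤ d) :
    seg y a b = seg (seg y c d) (a - c) (b - c) := by
  unfold seg
  rw [List.drop_take, List.drop_drop, Nat.add_sub_cancel' hca, List.take_take]
  congr 1
  omega

lemma seg_append (y : List α) {a b c : ℕ} (hab : a ≤ b) (hbc : b ≤ c) :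
    seg y a b ++ seg y b c = seg y a c := by
  unfold seg
  have : y.drop b = (y.drop a).drop (b - a) := by rw [List.drop_drop]; congr 1; omega
  rw [this, ← List.take_add]
  congr 1
  omega

lemma seg_length (y : List α) (a b : ℕ) : (seg y a b).length = min (b - a) (y.length - a) := by
  simp [seg]

lemma seg_drop (y : List α) {a b : ℕ} (hab : a ≤ b) :
    seg y a b ++ y.drop b = y.drop a := by
  unfold seg
  have : y.drop b = (y.drop a).drop (b - a) := by
    rw [List.drop_drop]; congr 1; omega
  rw [this, List.take_append_drop]

lemma seg_getElem (y : List α) (a b i : ℕ) (h : i < (seg y a b).length) :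
    (seg y a b)[i] = y[a + i]'(by simp [seg_length] at h; omega) := by
  simp only [seg, List.getElem_take, List.getElem_drop]

/-- extract x from y = a ++ x ++ x ++ b -/
lemma seg_first {a x b : List α} :
    seg (a ++ x ++ x ++ b) a.length (a.length + x.length) = x := by
  unfold seg
  have : a ++ x ++ x ++ b = a ++ (x ++ (x ++ b)) := by simp [List.append_assoc]
  rw [this, List.drop_left, Nat.add_sub_cancel_left, List.take_left]

lemma seg_second {a x b : List α} :
    seg (a ++ x ++ x ++ b) (a.length + x.length) (a.length + 2 * x.length) = x := by
  unfold seg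
  have h1 : a ++ x ++ x ++ b = (a ++ x) ++ (x ++ b) := by simp [List.append_assoc]
  have h2 : a.length + x.length = (a ++ x).length := by simp
  rw [h1, h2, List.drop_left]
  have : a.length + 2 * x.length - (a ++ x).length = x.length := by simp; omega
  rw [this, List.take_left]

lemma sf3 {a b c : α} (h1 : a ≠ b) (h2 : b ≠ c) : IsSquarefreeWord [a, b, c] := by
  rintro x hx ⟨u, v, huv⟩
  have hxpos := List.length_pos_iff.mpr hx
  have hlen := congrArg List.length huv
  simp at hlen
  have hx1 : x.length = 1 := by omega
  obtain ⟨d, rfl⟩ := List.length_eq_one_iff.mp hx1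
  have hu : u.length ≤ 1 := by omega
  interval_cases h : u.length
  · rw [List.length_eq_zero_iff.mp h] at huv
    simp at huv
    exact h1 (huv.1.trans huv.2.1.symm)
  · obtain ⟨e, rfl⟩ := List.length_eq_one_iff.mp h
    simp at huv
    exact h2 (huv.2.1.trans huv.2.2.1.symm)

lemma letter_square {w : List α} (hw : IsSquarefreeWord w) {a q : ℕ} (hq : 1 ≤ q)
    (hlen : a + 2 * q ≤ w.length)
    (heq : ∀ t, a ≤ t → t < a + q → ∀ (h1 : t < w.length) (h2 : t + q < w.length),
      w[t] = w[t + q]) : False := by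
  have hseg : seg w a (a + q) = seg w (a + q) (a + 2 * q) := by
    apply List.ext_getElem
    · simp [seg_length]; omega
    · intro i hi1 hi2
      rw [seg_getElem, seg_getElem]
      have : a + q + i = (a + i) + q := by omega
      simp only [this]
      exact heq (a + i) (by omega) (by simp [seg_length] at hi1; omega) _ _
  have hx : (seg w a (a + q)).length = q := by simp [seg_length]; omega
  apply hw (seg w a (a + q)) (by intro h; rw [h] at hx; simp at hx; omega)
  refine ⟨w.take a, w.drop (a + 2 * q), ?_⟩
  have e1 : w.take a ++ seg w a (a + q) ++ seg w a (a + q) ++ w.drop (a + 2 * q)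
      = w.take a ++ (seg w a (a + q) ++ (seg w (a + q) (a + 2 * q) ++ w.drop (a + 2 * q))) := by
    rw [hseg]; simp [List.append_assoc]
  rw [e1, seg_drop w (by omega), seg_drop w (by omega), List.take_append_drop]

lemma sf_adjacent {w : List α} (hw : IsSquarefreeWord w) {i : ℕ} (h : i + 1 < w.length)
    (hh : i < w.length) : w[i] ≠ w[i + 1] := by
  intro hEq
  exact letter_square (a := i) (q := 1) hw (le_refl 1) (by omega)
    (fun t ht1 ht2 h1 h2 => by
      have : t = i := by omega
      subst this; exact hEq)

section Blocks

variable (f : γ → List β) (n : ℕ)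

lemma join_length {l : List γ} (hf : ∀ p ∈ l, (f p).length = n) :
    ((l.map f).flatten).length = l.length * n := by
  induction l with
  | nil => simp
  | cons h t ih =>
    simp only [List.map_cons, List.flatten_cons, List.length_append, List.length_cons]
    rw [ih (fun p hp => hf p (List.mem_cons_of_mem h hp)), hf h (List.mem_cons_self)]
    ring

lemma drop_join {l : List γ} (hf : ∀ p ∈ l, (f p).length = n) (t : ℕ) :
    ((l.map f).flatten).drop (t * n) = (((l.drop t).map f)).flatten := by
  induction t generalizing l with
  | zero => simp
  | succ t ih =>
    cases l with
    | nil => simp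
    | cons h tl =>
      have : (t + 1) * n = n + t * n := by ring
      rw [this, ← List.drop_drop]
      simp only [List.map_cons, List.flatten_cons]
      rw [List.drop_append, hf h (List.mem_cons_self),
        List.drop_eq_nil_of_le (le_of_eq (hf h (List.mem_cons_self))), Nat.sub_self,
        List.drop_zero, List.nil_append]
      exact ih (fun p hp => hf p (List.mem_cons_of_mem h hp))

lemma take_join {l : List γ} (hf : ∀ p ∈ l, (f p).length = n) (u : ℕ) :
    ((l.map f).flatten).take (u * n) = (((l.take u).map f)).flatten := by
  induction u generalizing l with
  | zero => simp
  | succ u ih =>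
    cases l with
    | nil => simp
    | cons h tl =>
      have : (u + 1) * n = n + u * n := by ring
      rw [this]
      simp only [List.map_cons, List.flatten_cons, List.take_succ_cons]
      rw [List.take_append]
      rw [List.take_of_length_le (by rw [hf h (List.mem_cons_self)]; omega)]
      rw [hf h (List.mem_cons_self)]
      have hnn : n + u * n - n = u * n := by omega
      rw [hnn]
      rw [ih (fun p hp => hf p (List.mem_cons_of_mem h hp))]
      
end Blocks

end BrinkhuisAux

namespace BrinkhuisAux2
open BrinkhuisAux

variable {α β γ : Type*} (f : γ → List β) (n : ℕ)

lemma take_drop_succ {l : List γ} {t u : ℕ} (h : t < l.length) :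
    (l.drop t).take (u + 1) = l[t] :: (l.drop (t + 1)).take u := by
  rw [List.drop_eq_getElem_cons h]
  rfl

lemma list_take1 {l : List γ} {t : ℕ} (h : t < l.length) :
    (l.drop t).take 1 = [l[t]] := by
  rw [show (1 : ℕ) = 0 + 1 from rfl, take_drop_succ h]
  simp

lemma list_take2 {l : List γ} {t : ℕ} (h : t + 1 < l.length) :
    (l.drop t).take 2 = [l[t], l[t + 1]] := by
  rw [show (2 : ℕ) = 1 + 1 from rfl, take_drop_succ (by omega : t < l.length), list_take1 h]

lemma list_take3 {l : List γ} {t : ℕ} (h : t + 2 < l.length) :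
    (l.drop t).take 3 = [l[t], l[t + 1], l[t + 2]] := by
  rw [show (3 : ℕ) = 2 + 1 from rfl, take_drop_succ (by omega : t < l.length), list_take2 h]

lemma seg_join {l : List γ} (hf : ∀ p ∈ l, (f p).length = n) (t u : ℕ) :
    seg ((l.map f).flatten) (t * n) (t * n + u * n) = (((l.drop t).take u).map f).flatten := by
  unfold seg
  rw [drop_join f n hf t, Nat.add_sub_cancel_left,
    take_join f n (fun p hp => hf p (List.mem_of_mem_drop hp)) u]

lemma seg_block {l : List γ} (hf : ∀ p ∈ l, (f p).length = n) {t : ℕ} (h : t < l.length) :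
    seg ((l.map f).flatten) (t * n) (t * n + n) = f l[t] := by
  have := seg_join f n hf t 1
  rw [one_mul] at this
  rw [this, list_take1 h]
  simp

lemma seg_block2 {l : List γ} (hf : ∀ p ∈ l, (f p).length = n) {t : ℕ} (h : t + 1 < l.length) :
    seg ((l.map f).flatten) (t * n) (t * n + (n + n)) = f l[t] ++ f l[t + 1] := by
  have := seg_join f n hf t 2
  have h2 : (2 : ℕ) * n = n + n := by ring
  rw [h2] at this
  rw [this, list_take2 h]
  simp

lemma seg_block3 {l : List γ} (hf : ∀ p ∈ l, (f p).length = n) {t : ℕ} (h : t + 2 < l.length) :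
    seg ((l.map f).flatten) (t * n) (t * n + (n + n + n)) = f l[t] ++ (f l[t + 1] ++ f l[t + 2]) := by
  have := seg_join f n hf t 3
  have h2 : (3 : ℕ) * n = n + n + n := by ring
  rw [h2] at this
  rw [this, list_take3 h]
  simp

/-- extraction of an unaligned window from two consecutive blocks -/
lemma seg_mid {A Bb : List β} {r : ℕ} (hA : A.length = n) (hr : r ≤ n) :
    seg (A ++ Bb) r (r + n) = A.drop r ++ Bb.take r := by
  unfold seg
  have h1 : (A.drop r).length = n - r := by simp [hA]
  rw [Nat.add_sub_cancel_left, List.drop_append, hA,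
    Nat.sub_eq_zero_of_le hr, List.drop_zero, List.take_append,
    List.take_of_length_le (by omega), h1]
  have h2 : n - (n - r) = r := by omega
  rw [h2]

lemma square1 {V Z W : List β} (r : ℕ) (hZ : Z = V.drop r ++ W.take r) :
    V ++ Z = V.take r ++ V.drop r ++ V.drop r ++ W.take r := by
  calc V ++ Z = (V.take r ++ V.drop r) ++ (V.drop r ++ W.take r) := by
        rw [List.take_append_drop, hZ]
    _ = _ := by simp [List.append_assoc]

lemma square2 {V Z W : List β} (r : ℕ) (hZ : Z = V.drop r ++ W.take r) :
    Z ++ W = V.drop r ++ W.take r ++ W.take r ++ W.drop r := by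
  calc Z ++ W = (V.drop r ++ W.take r) ++ (W.take r ++ W.drop r) := by
        rw [List.take_append_drop, hZ]
    _ = _ := by simp [List.append_assoc]

lemma sq3' (A Bb C D : List β) :
    (A ++ Bb) ++ (C ++ Bb) ++ (C ++ D) = A ++ (Bb ++ C) ++ (Bb ++ C) ++ D := by
  simp [List.append_assoc]

lemma square3 {V Z X : List β} (ρ : ℕ) (hZ : Z = X.take ρ ++ V.drop ρ) :
    V ++ Z ++ X = V.take ρ ++ (V.drop ρ ++ X.take ρ) ++ (V.drop ρ ++ X.take ρ) ++ X.drop ρ := by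
  have h := sq3' (V.take ρ) (V.drop ρ) (X.take ρ) (X.drop ρ)
  rw [List.take_append_drop, List.take_append_drop] at h
  rw [hZ]
  exact h

end BrinkhuisAux2

namespace BrinkhuisMain
open BrinkhuisAux BrinkhuisAux2

variable {n k : ℕ} {B : Fin 3 → Fin k → List (Fin 3)}

/-- the block substitution map -/
def bl (B : Fin 3 → Fin k → List (Fin 3)) : Fin 3 × Fin k → List (Fin 3) :=
  fun p => B p.1 p.2

lemma pair_sf (hB : IsBrinkhuisTriple n k B) (i₁ i₂ : Fin 3) (j₁ j₂ : Fin k)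
    (h12 : i₁ ≠ i₂) : IsSquarefreeWord (B i₁ j₁ ++ B i₂ j₂) := by
  obtain ⟨i₃, h23⟩ := exists_ne i₂
  have h3 := hB.2.2 i₁ i₂ i₃ (sf3 h12 (Ne.symm h23)) j₁ j₂ j₁
  exact sf_of_infix (List.prefix_append _ _).isInfix h3

lemma cross_inj (hn : 2 ≤ n) (hB : IsBrinkhuisTriple n k B) {a b : Fin 3 × Fin k}
    (h : bl B a = bl B b) : a = b := by
  obtain ⟨i, j⟩ := a
  obtain ⟨i', j'⟩ := b
  by_cases hii : i = i'
  · subst hii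
    have h2 := hB.2.1 i h
    simp only [Prod.mk.injEq]
    exact ⟨trivial, h2⟩
  · exfalso
    have hp := pair_sf hB i i' j j' hii
    have hne : B i' j' ≠ [] := by
      have := (hB.1 i' j').1
      intro hnil
      rw [hnil] at this
      simp at this
      omega
    apply hp (B i' j') hne
    refine ⟨[], [], ?_⟩
    simp only [bl] at h
    rw [h]
    simp

theorem key (hn : 2 ≤ n) (hB : IsBrinkhuisTriple n k B) (l : List (Fin 3 × Fin k))
    (hw : IsSquarefreeWord (l.map Prod.fst)) :
    IsSquarefreeWord ((l.map (bl B)).flatten) := by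
  obtain ⟨y, hy_def⟩ : ∃ y, y = (l.map (bl B)).flatten := ⟨_, rfl⟩
  rw [← hy_def]
  obtain ⟨m, hm_def⟩ : ∃ m, m = l.length := ⟨_, rfl⟩
  rintro x hx ⟨a0, b0, hy⟩
  have hn0 : 0 < n := by omega
  have hblen : ∀ p ∈ l, (bl B p).length = n := fun p _ => (hB.1 p.1 p.2).1
  have hyL : y.length = m * n := by
    rw [hy_def, join_length _ n hblen, hm_def]
  obtain ⟨p, hp_def⟩ : ∃ p, p = a0.length := ⟨_, rfl⟩
  obtain ⟨L, hL_def⟩ : ∃ L, L = x.length := ⟨_, rfl⟩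
  have hL1 : 1 ≤ L := by
    rw [hL_def]
    exact List.length_pos_iff.mpr hx
  have hcov : p + 2 * L + b0.length = m * n := by
    have h := congrArg List.length hy
    simp only [List.length_append] at h
    rw [← hyL]
    omega
  have hx1 : seg y p (p + L) = x := by
    rw [hy, hp_def, hL_def]; exact seg_first
  have hx2 : seg y (p + L) (p + 2 * L) = x := by
    rw [hy, hp_def, hL_def]; exact seg_second
  have shift : ∀ a b : ℕ, p ≤ a → b ≤ p + L → seg y a b = seg y (a + L) (b + L) := by
    intro a b hpa hbl
    have e1 : seg y a b = seg (seg y p (p + L)) (a - p) (b - p) := seg_subseg y hpa hbl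
    have e2 : seg y (a + L) (b + L)
        = seg (seg y (p + L) (p + 2 * L)) (a + L - (p + L)) (b + L - (p + L)) :=
      seg_subseg y (by omega) (by omega)
    rw [e1, e2, hx1, hx2]
    congr 1 <;> omega
  have hUB : ∀ t : ℕ, t < m → ∀ (ht : t < l.length),
      seg y (t * n) (t * n + n) = bl B (l[t]'ht) := by
    intro t _ ht
    rw [hy_def]
    exact seg_block (bl B) n hblen ht
  have hadj : ∀ t : ℕ, ∀ (h2 : t + 1 < m),
      (l[t]'(by omega)).1 ≠ (l[t + 1]'(by omega)).1 := by
    intro t h2 heq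
    refine sf_adjacent hw (i := t) (by simp; omega) (by simp; omega) ?_
    simp only [List.getElem_map]
    exact heq
  have hlsq : ∀ (a qq : ℕ), 1 ≤ qq → a + 2 * qq ≤ m →
      (∀ t, a ≤ t → t < a + qq → ∀ (h1 : t < l.length) (h2 : t + qq < l.length),
        (l[t]'h1).1 = (l[t + qq]'h2).1) → False := by
    intro a qq h1 h2 H
    refine letter_square hw (a := a) (q := qq) h1 (by simp; omega) ?_
    intro t ht1 ht2 hh1 hh2
    simp only [List.getElem_map]
    exact H t ht1 ht2 (by simpa using hh1) (by simpa using hh2)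
  have hwin : ∀ c u : ℕ, 1 ≤ u → u ≤ 3 → c + u ≤ m →
      IsSquarefreeWord (seg y (c * n) (c * n + u * n)) := by
    intro c u hu1 hu3 hcu
    rw [hy_def, seg_join (bl B) n hblen c u]
    interval_cases u
    · rw [list_take1 (by omega : c < l.length)]
      simpa [bl] using (hB.1 (l[c]'(by omega)).1 (l[c]'(by omega)).2).2
    · rw [list_take2 (by omega : c + 1 < l.length)]
      have hne := hadj c (by omega)
      simpa [bl] using pair_sf hB _ _ (l[c]'(by omega)).2 (l[c+1]'(by omega)).2 hne
    · rw [list_take3 (by omega : c + 2 < l.length)]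
      have hne1 := hadj c (by omega)
      have hne2 := hadj (c + 1) (by omega)
      have h3 := hB.2.2 _ _ _ (sf3 hne1 (by simpa using hne2))
        (l[c]'(by omega)).2 (l[c+1]'(by omega)).2 (l[c+2]'(by omega)).2
      simp only [List.map_cons, List.map_nil, List.flatten_cons, List.flatten_nil, List.append_nil]
      simpa [List.append_assoc, bl] using h3
  have hwindowed : ∀ cc u : ℕ, 1 ≤ u → u ≤ 3 → cc + u ≤ m → cc * n ≤ p →
      p + 2 * L ≤ cc * n + u * n → False := by
    intro cc u h1 h3 hcu hle hge
    have hsfw := (sf_iff _).mp (hwin cc u h1 h3 hcu)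
    apply hsfw x hx
    have hxx : x ++ x = seg y p (p + 2 * L) := by
      have := seg_append y (show p ≤ p + L by omega) (show p + L ≤ p + 2 * L by omega)
      rw [hx1, hx2] at this
      exact this
    rw [hxx, seg_subseg y hle hge]
    exact seg_infix _ _ _
  -- sync contradictions
  have syncA : ∀ (t s rr : ℕ), 0 < rr → rr < n → ∀ (ht : t < l.length) (hs : s + 1 < m),
      bl B (l[t]'ht) = (bl B (l[s]'(by omega))).drop rr ++ (bl B (l[s+1]'(by omega))).take rr
      → False := by
    intro t s rr hr0 hrn ht hs hZ
    have hvw := hadj s hs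
    have hWlen : (bl B (l[s+1]'(by omega))).length = n :=
      hblen _ (List.getElem_mem _)
    have hVlen : (bl B (l[s]'(by omega))).length = n := hblen _ (List.getElem_mem _)
    by_cases hzv : (l[t]'ht).1 = (l[s]'(by omega)).1
    · have hp' := pair_sf hB _ _ (l[t]'ht).2 ((l[s+1]'(by omega))).2
        (show (l[t]'ht).1 ≠ _ from hzv ▸ hvw)
      apply hp' ((bl B (l[s+1]'(by omega))).take rr)
        (by intro hnil; have := congrArg List.length hnil; simp [hWlen] at this; omega)
      exact ⟨(bl B (l[s]'(by omega))).drop rr, (bl B (l[s+1]'(by omega))).drop rr,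
        square2 rr hZ⟩
    · have hp' := pair_sf hB _ _ ((l[s]'(by omega))).2 (l[t]'ht).2
        (show (l[s]'(by omega)).1 ≠ (l[t]'ht).1 from fun h => hzv h.symm)
      apply hp' ((bl B (l[s]'(by omega))).drop rr)
        (by intro hnil; have := congrArg List.length hnil; simp [hVlen] at this; omega)
      exact ⟨(bl B (l[s]'(by omega))).take rr, (bl B (l[s+1]'(by omega))).take rr,
        square1 rr hZ⟩
  have syncB : ∀ (tV tZ tX ρ : ℕ), 0 < ρ → ρ < n →
      ∀ (hV : tV < l.length) (hZ' : tZ < l.length) (hX : tX < l.length),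
      (l[tV]'hV).1 ≠ (l[tZ]'hZ').1 → (l[tZ]'hZ').1 ≠ (l[tX]'hX).1 →
      bl B (l[tZ]'hZ') = (bl B (l[tX]'hX)).take ρ ++ (bl B (l[tV]'hV)).drop ρ → False := by
    intro tV tZ tX ρ hρ0 hρn hV hZ' hX h1 h2 hM
    have htr := hB.2.2 _ _ _ (sf3 h1 h2) (l[tV]'hV).2 (l[tZ]'hZ').2 (l[tX]'hX).2
    have hVlen : (bl B (l[tV]'hV)).length = n := hblen _ (List.getElem_mem _)
    apply htr ((bl B (l[tV]'hV)).drop ρ ++ (bl B (l[tX]'hX)).take ρ)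
      (by intro hnil; simp only [List.append_eq_nil_iff] at hnil
          have := congrArg List.length hnil.1; simp [hVlen] at this; omega)
    exact ⟨(bl B (l[tV]'hV)).take ρ, (bl B (l[tX]'hX)).drop ρ, square3 ρ hM⟩
  -- arithmetic setup
  obtain ⟨c, ρ, hp_eq, hρn⟩ : ∃ c ρ, p = c * n + ρ ∧ ρ < n :=
    ⟨p / n, p % n, by rw [Nat.mul_comm]; exact (Nat.div_add_mod p n).symm, Nat.mod_lt _ hn0⟩
  obtain ⟨q, r, hL_eq, hrn⟩ : ∃ q r, L = q * n + r ∧ r < n :=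
    ⟨L / n, L % n, by rw [Nat.mul_comm]; exact (Nat.div_add_mod L n).symm, Nat.mod_lt _ hn0⟩
  by_cases hr : r = 0
  · -- aligned length case : L = q * n
    subst hr
    have hq1 : 1 ≤ q := by
      rcases Nat.eq_zero_or_pos q with h | h
      · subst h; simp at hL_eq; omega
      · exact h
    by_cases hρ : ρ = 0
    · -- fully aligned
      subst hρ
      have hc2q : (c + 2 * q) * n = c * n + 2 * (q * n) := by ring
      have hmbound : c + 2 * q ≤ m := by
        have h1 : (c + 2 * q) * n ≤ m * n := by omega
        exact Nat.le_of_mul_le_mul_right h1 hn0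
      apply hlsq c q hq1 hmbound
      intro t ht1 ht2 h1 h2
      have htq : (t + q) * n = t * n + q * n := by ring
      have hct : c * n ≤ t * n := Nat.mul_le_mul ht1 (le_refl n)
      have htc : t * n + n ≤ (c + q) * n := by
          have hh := Nat.mul_le_mul (by omega : t + 1 ≤ c + q) (le_refl n)
          have he : (t + 1) * n = t * n + n := by ring
          omega
      have hcq : (c + q) * n = c * n + q * n := by ring
      have hsh := shift (t * n) (t * n + n) (by omega) (by omega)
      rw [hUB t (by omega) (by omega),
        show t * n + L = (t + q) * n by omega,
        show t * n + n + L = (t + q) * n + n by omega,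
        hUB (t + q) (by omega) (by omega)] at hsh
      exact congrArg Prod.fst (cross_inj hn hB hsh)
    · -- p unaligned, L aligned
      have hρ0 : 0 < ρ := Nat.pos_of_ne_zero hρ
      have hc2q : (c + 2 * q) * n = c * n + 2 * (q * n) := by ring
      have hcq : (c + q) * n = c * n + q * n := by ring
      have hqn : n ≤ q * n := Nat.le_mul_of_pos_left n hq1
      have hc2qm : c + 2 * q < m := by
        have h1 : (c + 2 * q) * n < m * n := by omega
        exact lt_of_mul_lt_mul_right h1 (Nat.zero_le n)
      have hmid : ∀ t, c + 1 ≤ t → t < c + q → ∀ (h1 : t < l.length) (h2 : t + q < l.length),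
          (l[t]'h1).1 = (l[t + q]'h2).1 := by
        intro t ht1 ht2 h1 h2
        have htq : (t + q) * n = t * n + q * n := by ring
        have hct : (c + 1) * n ≤ t * n := Nat.mul_le_mul ht1 (le_refl n)
        have hc1 : (c + 1) * n = c * n + n := by ring
        have htc : t * n + n ≤ (c + q) * n := by
          have hh := Nat.mul_le_mul (by omega : t + 1 ≤ c + q) (le_refl n)
          have he : (t + 1) * n = t * n + n := by ring
          omega
        have hsh := shift (t * n) (t * n + n) (by omega) (by omega)
        rw [hUB t (by omega) h1,
          show t * n + L = (t + q) * n by omega,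
          show t * n + n + L = (t + q) * n + n by omega,
          hUB (t + q) (by omega) h2] at hsh
        exact congrArg Prod.fst (cross_inj hn hB hsh)
      -- the straddling block relation
      have hcm : c + q < l.length := by rw [← hm_def]; omega
      have hc2ql : c + 2 * q < l.length := by rw [← hm_def]; omega
      have hcl : c < l.length := by rw [← hm_def]; omega
      have hp1 : seg y ((c + q) * n) (p + L) = (bl B (l[c + 2 * q]'hc2ql)).take ρ := by
        have e := shift ((c + q) * n) (p + L) (by omega) (le_refl _)
        rw [show (c + q) * n + L = (c + 2 * q) * n by omega,
          show p + L + L = (c + 2 * q) * n + ρ by omega] at e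
        rw [e]
        have e2 : seg y ((c + 2 * q) * n) ((c + 2 * q) * n + ρ)
            = seg (seg y ((c + 2 * q) * n) ((c + 2 * q) * n + n)) 0 ρ := by
          have h := seg_subseg y (le_refl ((c + 2 * q) * n))
            (show (c + 2 * q) * n + ρ ≤ (c + 2 * q) * n + n by omega)
          rw [h]
          congr 1 <;> omega
        rw [e2, hUB (c + 2 * q) (by omega) hc2ql]
        simp [seg]
      have hp2 : seg y (p + L) ((c + q) * n + n) = (bl B (l[c]'hcl)).drop ρ := by
        have e := shift p (c * n + n) (le_refl p) (by omega)
        rw [show c * n + n + L = (c + q) * n + n by omega] at e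
        rw [show p + L = p + L from rfl, ← e]
        have e2 : seg y p (c * n + n) = seg (seg y (c * n) (c * n + n)) ρ n := by
          have h := seg_subseg y (show c * n ≤ p by omega)
            (show c * n + n ≤ c * n + n from le_refl _)
          rw [h]
          congr 1 <;> omega
        rw [e2, hUB c (by omega) hcl]
        have hXl : (bl B (l[c]'hcl)).length = n := hblen _ (List.getElem_mem _)
        show ((bl B (l[c]'hcl)).drop ρ).take (n - ρ) = _
        rw [List.take_of_length_le (by simp [hXl])]
      have hM : bl B (l[c + q]'hcm)
          = (bl B (l[c + 2 * q]'hc2ql)).take ρ ++ (bl B (l[c]'hcl)).drop ρ := by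
        rw [← hUB (c + q) (by omega) hcm, ← hp1, ← hp2]
        exact (seg_append y (by omega) (by omega)).symm
      by_cases hv : (l[c]'hcl).1 = (l[c + q]'hcm).1
      · apply hlsq c q hq1 (by omega)
        intro t ht1 ht2 h1 h2
        rcases eq_or_lt_of_le ht1 with rfl | hlt
        · exact hv
        · exact hmid t (by omega) ht2 h1 h2
      · by_cases hx' : (l[c + q]'hcm).1 = (l[c + 2 * q]'hc2ql).1
        · apply hlsq (c + 1) q hq1 (by omega)
          intro t ht1 ht2 h1 h2
          rcases eq_or_lt_of_le (show t ≤ c + q by omega) with heq | hlt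
          · subst heq
            have hix : c + q + q = c + 2 * q := by ring
            simp only [hix]
            exact hx'
          · exact hmid t ht1 (by omega) h1 h2
        · exact syncB c (c + q) (c + 2 * q) ρ hρ0 hρn hcl hcm hc2ql hv hx' hM
  · -- r ≠ 0
    have hr0 : 0 < r := Nat.pos_of_ne_zero hr
    by_cases hfwd : ∃ t, p ≤ t * n ∧ t * n + n ≤ p + L
    · obtain ⟨t, ht1, ht2⟩ := hfwd
      have htq : (t + q) * n = t * n + q * n := by ring
      have htq1 : (t + q + 1) * n = t * n + q * n + n := by ring
      have hsm : t + q + 1 < m := by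
        have h1 : (t + q + 1) * n < m * n := by omega
        exact lt_of_mul_lt_mul_right h1 (Nat.zero_le n)
      have htl : t < l.length := by rw [← hm_def]; omega
      have htql : t + q + 1 < l.length := by rw [← hm_def]; omega
      have hE := shift (t * n) (t * n + n) ht1 ht2
      have hminor : seg y (t * n + L) (t * n + n + L)
          = (bl B (l[t + q]'(by omega))).drop r
            ++ (bl B (l[t + q + 1]'htql)).take r := by
        have e1 : seg y (t * n + L) (t * n + n + L)
            = seg (seg y ((t + q) * n) ((t + q) * n + (n + n))) r (r + n) := by
          have h := seg_subseg y (show (t + q) * n ≤ t * n + L by omega)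
            (show t * n + n + L ≤ (t + q) * n + (n + n) by omega)
          rw [h]
          congr 1 <;> omega
        rw [e1, hy_def, seg_block2 (bl B) n hblen (show t + q + 1 < l.length from htql)]
        exact seg_mid n (hblen _ (List.getElem_mem _)) (le_of_lt hrn)
      rw [hUB t (by omega) htl, hminor] at hE
      exact syncA t (t + q) r hr0 hrn htl (by omega) hE
    · by_cases hbwd : ∃ t, p + L ≤ t * n ∧ t * n + n ≤ p + 2 * L
      · obtain ⟨t, ht1, ht2⟩ := hbwd
        have hqt : q + 1 ≤ t := by
          have h1 : q * n < t * n := by omega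
          have := lt_of_mul_lt_mul_right h1 (Nat.zero_le n)
          omega
        obtain ⟨s, rfl⟩ : ∃ s, t = s + q + 1 := ⟨t - q - 1, by omega⟩
        have hd : (s + q + 1) * n = s * n + q * n + n := by ring
        have hs1 : (s + 1) * n = s * n + n := by ring
        have htm : s + q + 1 < m := by
          have h1 : (s + q + 1 + 1) * n ≤ m * n := by
            have : (s + q + 1 + 1) * n = s * n + q * n + n + n := by ring
            omega
          have := Nat.le_of_mul_le_mul_right h1 hn0
          omega
        have hsm : s + 1 < m := by
          have h1 : (s + 1 + 1) * n ≤ m * n := by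
            have h2 : (s + 1 + 1) * n = s * n + n + n := by ring
            omega
          have := Nat.le_of_mul_le_mul_right h1 hn0
          omega
        have htl : s + q + 1 < l.length := by rw [← hm_def]; omega
        have hsl : s + 1 < l.length := by rw [← hm_def]; omega
        have hE := shift (s * n + (n - r)) (s * n + (n - r) + n) (by omega) (by omega)
        rw [show s * n + (n - r) + L = (s + q + 1) * n by omega,
          show s * n + (n - r) + n + L = (s + q + 1) * n + n by omega,
          hUB (s + q + 1) (by omega) htl] at hE
        have hminor : seg y (s * n + (n - r)) (s * n + (n - r) + n)
            = (bl B (l[s]'(by omega))).drop (n - r) ++ (bl B (l[s + 1]'hsl)).take (n - r) := by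
          have e1 : seg y (s * n + (n - r)) (s * n + (n - r) + n)
              = seg (seg y (s * n) (s * n + (n + n))) (n - r) ((n - r) + n) := by
            have h := seg_subseg y (show s * n ≤ s * n + (n - r) by omega)
              (show s * n + (n - r) + n ≤ s * n + (n + n) by omega)
            rw [h]
            congr 1 <;> omega
          rw [e1, hy_def, seg_block2 (bl B) n hblen (show s + 1 < l.length from hsl)]
          exact seg_mid n (hblen _ (List.getElem_mem _)) (by omega)
        rw [hminor] at hE
        exact syncA (s + q + 1) s (n - r) (by omega) (by omega) htl hsm hE.symm
      · -- window case
        push_neg at hfwd hbwd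
        have hc1 : (c + 1) * n = c * n + n := by ring
        have hc2 : (c + 2) * n = c * n + 2 * n := by ring
        have hc3 : (c + 3) * n = c * n + 3 * n := by ring
        have hwb : p + 2 * L ≤ c * n + 3 * n := by
          by_cases hρ : ρ = 0
          · have h1 := hfwd c (by omega)
            omega
          · have h1 := hfwd (c + 1) (by omega)
            have h2 := hbwd (c + 2) (by omega)
            omega
        have hcm : c < m := by
          have h1 : c * n < m * n := by omega
          exact lt_of_mul_lt_mul_right h1 (Nat.zero_le n)
        obtain ⟨u, hu_def⟩ : ∃ u, u = min 3 (m - c) := ⟨_, rfl⟩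
        have hcu : c + u ≤ m := by omega
        have hu1 : 1 ≤ u := by omega
        have hu3 : u ≤ 3 := by omega
        apply hwindowed c u hu1 hu3 hcu (by omega)
        have hor : u = 3 ∨ c + u = m := by omega
        rcases hor with rfl | hcum
        · omega
        · have h5 : (c + u) * n = c * n + u * n := by ring
          rw [hcum] at h5
          omega
  
end BrinkhuisMain
namespace BrinkhuisCount
open BrinkhuisMain

variable {n k : ℕ} {B : Fin 3 → Fin k → List (Fin 3)}

def Sset (m : ℕ) : Set (List (Fin 3)) := {w | w.length = m ∧ IsSquarefreeWord w}

lemma sCount_eq (m : ℕ) : sCount m = (Sset m).ncard := rfl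

lemma Sset_finite (m : ℕ) : (Sset m).Finite :=
  (List.finite_length_eq (α := Fin 3) (n := m)).subset (fun _ hw => hw.1)

lemma ncard_len (α : Type*) [Fintype α] (m : ℕ) :
    {w : List α | w.length = m}.ncard = Fintype.card α ^ m := by
  rw [← Nat.card_coe_set_eq]
  have e : {w : List α | w.length = m} ≃ List.Vector α m :=
    Equiv.subtypeEquivRight (fun w => by simp [Set.mem_setOf_eq])
  rw [Nat.card_congr e, Nat.card_eq_fintype_card, card_vector]

lemma join_inj (hn : 2 ≤ n) (hB : IsBrinkhuisTriple n k B) :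
    ∀ (l l' : List (Fin 3 × Fin k)), l.length = l'.length →
    (l.map (bl B)).flatten = (l'.map (bl B)).flatten → l = l' := by
  intro l
  induction l with
  | nil =>
    intro l' h1 _
    cases l' with
    | nil => rfl
    | cons a t => simp at h1
  | cons a t ih =>
    intro l' h1 h2
    cases l' with
    | nil => simp at h1
    | cons a' t' =>
      simp only [List.map_cons, List.flatten_cons] at h2
      have hla : (bl B a).length = n := (hB.1 a.1 a.2).1
      have hla' : (bl B a').length = n := (hB.1 a'.1 a'.2).1
      have hhead : bl B a = bl B a' := by
        have h3 := congrArg (List.take n) h2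
        rwa [List.take_left' hla, List.take_left' hla'] at h3
      have htail := congrArg (List.drop n) h2
      rw [List.drop_left' hla, List.drop_left' hla'] at htail
      have := ih t' (by simpa using h1) htail
      rw [cross_inj hn hB hhead, this]

theorem count_step (hn : 2 ≤ n) (hB : IsBrinkhuisTriple n k B) (m : ℕ) :
    k ^ m * sCount m ≤ sCount (m * n) := by
  classical
  set T : Set (List (Fin k)) := {v | v.length = m} with hT
  set D : Set (List (Fin 3 × Fin k)) :=
    {l | l.length = m ∧ IsSquarefreeWord (l.map Prod.fst)} with hD
  set F : List (Fin 3) × List (Fin k) → List (Fin 3 × Fin k) := fun q => q.1.zip q.2 with hF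
  have himg : F '' (Sset m ×ˢ T) = D := by
    apply Set.Subset.antisymm
    · rintro _ ⟨⟨w, v⟩, ⟨hw, hv⟩, rfl⟩
      have hwl : w.length = m := hw.1
      have hvl : v.length = m := hv
      constructor
      · simp [hF, List.length_zip, hwl, hvl]
      · have : (w.zip v).map Prod.fst = w := List.map_fst_zip (l₁ := w) (l₂ := v) (by omega)
        simpa [hF, this] using hw.2
    · intro l hl
      refine ⟨(l.map Prod.fst, l.map Prod.snd),
        ⟨⟨by show (l.map Prod.fst).length = m; simpa using hl.1, hl.2⟩,
          by show (l.map Prod.snd).length = m; simpa using hl.1⟩, ?_⟩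
      simp only [hF]
      exact (List.zip_of_prod rfl rfl).symm
  have hinj : Set.InjOn F (Sset m ×ˢ T) := by
    rintro ⟨w, v⟩ ⟨hw, hv⟩ ⟨w', v'⟩ ⟨hw', hv'⟩ heq
    simp only [hF] at heq
    have h1 : (w.zip v).map Prod.fst = w := List.map_fst_zip (l₁ := w) (l₂ := v) (by rw [hw.1, hv])
    have h2 : (w'.zip v').map Prod.fst = w' := List.map_fst_zip (l₁ := w') (l₂ := v') (by rw [hw'.1, hv'])
    have h3 : (w.zip v).map Prod.snd = v := List.map_snd_zip (l₁ := w) (l₂ := v) (by rw [hw.1, hv])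
    have h4 : (w'.zip v').map Prod.snd = v' := List.map_snd_zip (l₁ := w') (l₂ := v') (by rw [hw'.1, hv'])
    have : w = w' := by rw [← h1, ← h2, heq]
    have : v = v' := by rw [← h3, ← h4, heq]
    simp_all
  have hDcard : D.ncard = sCount m * k ^ m := by
    rw [← himg, Set.ncard_image_of_injOn hinj, ← Nat.card_coe_set_eq,
      Nat.card_congr (Equiv.Set.prod _ _), Nat.card_prod,
      Nat.card_coe_set_eq, Nat.card_coe_set_eq, sCount_eq, hT, ncard_len]
    simp
  set Ψ : List (Fin 3 × Fin k) → List (Fin 3) := fun l => (l.map (bl B)).flatten with hΨ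
  have hΨinj : Set.InjOn Ψ D := fun l hl l' hl' heq =>
    join_inj hn hB l l' (hl.1.trans hl'.1.symm) heq
  have hΨimg : Ψ '' D ⊆ Sset (m * n) := by
    rintro _ ⟨l, hl, rfl⟩
    constructor
    · rw [hΨ]
      have := BrinkhuisAux.join_length (bl B) n (l := l) (fun p _ => (hB.1 p.1 p.2).1)
      simp only at this ⊢
      rw [this, hl.1]
    · exact key hn hB l hl.2
  calc k ^ m * sCount m = D.ncard := by rw [hDcard]; ring
    _ = (Ψ '' D).ncard := (Set.ncard_image_of_injOn hΨinj).symm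
    _ ≤ (Sset (m * n)).ncard := Set.ncard_le_ncard hΨimg (Sset_finite _)
    _ = sCount (m * n) := (sCount_eq _).symm

end BrinkhuisCount
namespace BrinkhuisFinal
open BrinkhuisMain BrinkhuisCount Filter

/-- partial geometric sums `n^(t-1) + ... + n + 1` -/
def geomSum (n : ℕ) : ℕ → ℕ
  | 0 => 0
  | (t+1) => n ^ t + geomSum n t

lemma geomSum_eq {n : ℕ} (hn : 1 ≤ n) (t : ℕ) : (n - 1) * geomSum n t + 1 = n ^ t := by
  induction t with
  | zero => simp [geomSum]
  | succ t ih =>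
    have hh : (n-1) * n ^ t + n ^ t = n ^ (t+1) := by
      have : (n - 1) * n ^ t + n ^ t = ((n-1) + 1) * n ^ t := by ring
      rw [this, Nat.sub_add_cancel hn, pow_succ]
      ring
    calc (n - 1) * geomSum n (t+1) + 1 = (n-1) * n ^ t + ((n-1) * geomSum n t + 1) := by
          rw [geomSum]; ring
      _ = (n-1) * n ^ t + n ^ t := by rw [ih]
      _ = n ^ (t+1) := hh

lemma sCount_one_pos : 0 < sCount 1 := by
  rw [sCount_eq, Set.ncard_pos (Sset_finite 1)]
  refine ⟨[0], rfl, ?_⟩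
  intro x hx ⟨a, b, hab⟩
  have h1 := List.length_pos_iff.mpr hx
  have h2 := congrArg List.length hab
  simp at h2
  omega

lemma pow_le_sCount {n k : ℕ} {B : Fin 3 → Fin k → List (Fin 3)} (hn : 2 ≤ n)
    (hB : IsBrinkhuisTriple n k B) (t : ℕ) :
    k ^ (geomSum n t) ≤ sCount (n ^ t) := by
  induction t with
  | zero => simp only [geomSum, pow_zero]; exact sCount_one_pos
  | succ t ih =>
    calc k ^ geomSum n (t+1) = k ^ (n ^ t) * k ^ (geomSum n t) := by
          rw [geomSum, pow_add]
      _ ≤ k ^ (n ^ t) * sCount (n ^ t) := Nat.mul_le_mul_left _ ih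
      _ ≤ sCount (n ^ t * n) := count_step hn hB (n ^ t)
      _ = sCount (n ^ (t+1)) := by rw [pow_succ]

end BrinkhuisFinal

theorem brinkhuis_growth_lower_bound (n k : ℕ) (hn : 2 ≤ n)
    (B : Fin 3 → Fin k → List (Fin 3)) (hB : IsBrinkhuisTriple n k B)
    (s : ℝ)
    (hs : Filter.Tendsto (fun m : ℕ => (sCount m : ℝ) ^ (1 / (m : ℝ)))
      Filter.atTop (nhds s)) :
    (k : ℝ) ^ ((1 : ℝ) / ((n : ℝ) - 1)) ≤ s := by
  open Filter BrinkhuisFinal in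
  have hn1 : (1:ℝ) ≤ (n:ℝ) - 1 := by
    have : (2:ℝ) ≤ (n:ℝ) := by exact_mod_cast hn
    linarith
  have hs0 : 0 ≤ s :=
    ge_of_tendsto' hs (fun m => by positivity)
  rcases Nat.eq_zero_or_pos k with rfl | hk
  · rw [Nat.cast_zero, Real.zero_rpow (by positivity : (1:ℝ)/((n:ℝ)-1) ≠ 0)]
    exact hs0
  -- k ≥ 1
  have hkR : (1:ℝ) ≤ (k:ℝ) := by exact_mod_cast hk
  -- subsequence along n^t
  have hpow : Filter.Tendsto (fun t : ℕ => n ^ t) Filter.atTop Filter.atTop :=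
    tendsto_pow_atTop_atTop_of_one_lt (by omega)
  have h1 : Filter.Tendsto (fun t : ℕ => (sCount (n ^ t) : ℝ) ^ (1 / ((n ^ t : ℕ) : ℝ)))
      Filter.atTop (nhds s) := hs.comp hpow
  -- exponent limit
  have hxlim : Filter.Tendsto
      (fun t : ℕ => ((geomSum n t : ℕ) : ℝ) / ((n ^ t : ℕ) : ℝ))
      Filter.atTop (nhds ((1:ℝ) / ((n:ℝ) - 1))) := by
    have hform : ∀ t : ℕ, ((geomSum n t : ℕ) : ℝ) / ((n ^ t : ℕ) : ℝ)
        = (1 - ((n:ℝ)⁻¹) ^ t) / ((n:ℝ) - 1) := by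
      intro t
      have hid := geomSum_eq (by omega : 1 ≤ n) t
      have hidR : ((n:ℝ) - 1) * ((geomSum n t : ℕ) : ℝ) + 1 = (n:ℝ) ^ t := by
        have := congrArg (fun x : ℕ => (x : ℝ)) hid
        push_cast at this
        rw [Nat.cast_sub (by omega : 1 ≤ n)] at this
        push_cast at this
        linarith [this]
      have hnpos : (0:ℝ) < (n:ℝ) := by positivity
      have hntpos : (0:ℝ) < (n:ℝ) ^ t := by positivity
      push_cast
      rw [div_eq_div_iff (by positivity) (by linarith)]
      field_simp
      nlinarith [hidR, hntpos, show ((1:ℝ)/n)^t * (n:ℝ)^t = 1 by rw [← mul_pow, one_div, inv_mul_cancel₀ hnpos.ne', one_pow]]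
    simp only [hform]
    have hr : |((n:ℝ)⁻¹)| < 1 := by
      rw [abs_of_nonneg (by positivity)]
      rw [inv_lt_one_iff₀]
      right
      exact_mod_cast by omega
    have h0 : Filter.Tendsto (fun t : ℕ => ((n:ℝ)⁻¹) ^ t) Filter.atTop (nhds 0) :=
      tendsto_pow_atTop_nhds_zero_of_abs_lt_one hr
    have := ((tendsto_const_nhds (x := (1:ℝ))).sub h0).div_const ((n:ℝ) - 1)
    simpa using this
  have h3 : Filter.Tendsto
      (fun t : ℕ => (k:ℝ) ^ (((geomSum n t : ℕ) : ℝ) / ((n ^ t : ℕ) : ℝ)))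
      Filter.atTop (nhds ((k:ℝ) ^ ((1:ℝ) / ((n:ℝ) - 1)))) :=
    Filter.Tendsto.rpow tendsto_const_nhds hxlim (Or.inl (by positivity))
  refine le_of_tendsto_of_tendsto' h3 h1 (fun t => ?_)
  have hkp := BrinkhuisFinal.pow_le_sCount hn hB t
  have hNpos : (0:ℝ) < ((n ^ t : ℕ) : ℝ) := by positivity
  calc (k:ℝ) ^ (((geomSum n t : ℕ) : ℝ) / ((n ^ t : ℕ) : ℝ))
      = ((k:ℝ) ^ ((geomSum n t : ℕ) : ℝ)) ^ (1 / ((n ^ t : ℕ) : ℝ)) := by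
        rw [← Real.rpow_mul (by positivity), mul_one_div]
    _ ≤ ((sCount (n ^ t) : ℕ) : ℝ) ^ (1 / ((n ^ t : ℕ) : ℝ)) := by
        apply Real.rpow_le_rpow (by positivity) _ (by positivity)
        rw [Real.rpow_natCast]
        exact_mod_cast hkp
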